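/- Let γ₃(𝓑) = [[𝓑, 𝓑], 𝓑] be the third term of the lower central series of the Basilica group 𝓑. Then the quotient 𝓑/γ₃(𝓑) is isomorphic to the discrete Heisenberg group H₃(ℤ), the group of 3×3 upper triangular integer matrices with all diagonal entries equal to 1. -/

import Mathlib

open Equiv

namespace PaperDefs


/-! ### Regular rooted trees `X*` (vertices = finite words = lists) -/

variable (X : Type)

/-- The automorphism group of the regular rooted tree `X*`: permutations of the
set of finite words preserving the prefix relation. -/
def treeAutL : Subgroup (Perm (List X)) where
  carrier := {g | ∀ v w : List X, v <+: w ↔ g v <+: g w}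
  one_mem' := by intro v w; simp
  mul_mem' := by
    intro a b ha hb v w
    simpa [Equiv.Perm.mul_apply] using (hb v w).trans (ha (b v) (b w))
  inv_mem' := by
    intro a ha v w
    simpa using (ha (a⁻¹ v) (a⁻¹ w)).symm

/-- The rigid stabiliser of the vertex `v ∈ X*` in `H`. -/
def ristL (H : Subgroup (Perm (List X))) (v : List X) : Subgroup (Perm (List X)) where
  carrier := {g | g ∈ H ∧ ∀ w, ¬ v <+: w → g w = w}
  one_mem' := ⟨H.one_mem, fun w _ => by simp⟩
  mul_mem' := by
    rintro a b ⟨haG, ha⟩ ⟨hbG, hb⟩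
    refine ⟨H.mul_mem haG hbG, fun w hw => ?_⟩
    simp [Equiv.Perm.mul_apply, hb w hw, ha w hw]
  inv_mem' := by
    rintro a ⟨haG, ha⟩
    refine ⟨H.inv_mem haG, fun w hw => ?_⟩
    conv_lhs => rw [← ha w hw]
    simp

/-- The rigid stabiliser of the `n`-th level. -/
def ristLevelL (H : Subgroup (Perm (List X))) (n : ℕ) : Subgroup (Perm (List X)) :=
  ⨆ (v : List X) (_ : v.length = n), ristL X H v

/-- Spherically transitive action on `X*`. -/
def SphTransL (G : Subgroup (Perm (List X))) : Prop :=
  ∀ v w : List X, v.length = w.length → ∃ g ∈ G, g v = w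

/-- `G ≤ Aut(X*)` is a weakly branch group. -/
def IsWeaklyBranchL (G : Subgroup (Perm (List X))) : Prop :=
  G ≤ treeAutL X ∧ SphTransL X G ∧ ∀ v : List X, ristL X G v ≠ ⊥

/-- `projL X v H = φ_v(St_H(v))`: the image under the projection `φ_v` of the
stabiliser of `v` in `H`, where the subtree at `v` is identified with `X*` itself;
it consists of those `σ` for which some `g ∈ H` satisfies `g (v·w) = v·(σ w)`
for every word `w`. -/
def projL (v : List X) (H : Subgroup (Perm (List X))) : Subgroup (Perm (List X)) where
  carrier := {σ | ∃ g ∈ H, ∀ w : List X, g (v ++ w) = v ++ σ w}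
  one_mem' := ⟨1, H.one_mem, fun w => by simp⟩
  mul_mem' := by
    rintro σ τ ⟨g, hgH, hg⟩ ⟨g', hg'H, hg'⟩
    exact ⟨g * g', H.mul_mem hgH hg'H, fun w => by
      simp [Equiv.Perm.mul_apply, hg' w, hg (τ w)]⟩
  inv_mem' := by
    rintro σ ⟨g, hgH, hg⟩
    refine ⟨g⁻¹, H.inv_mem hgH, fun w => ?_⟩
    have h1 : g (v ++ σ⁻¹ w) = v ++ w := by
      rw [hg (σ⁻¹ w)]; simp
    calc g⁻¹ (v ++ w) = g⁻¹ (g (v ++ σ⁻¹ w)) := by rw [h1]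
      _ = v ++ σ⁻¹ w := by simp

/-- `G ≤ Aut(X*)` is self-similar: `G_v ≤ G` for every vertex. -/
def SelfSimilarL (G : Subgroup (Perm (List X))) : Prop :=
  ∀ v : List X, projL X v G ≤ G

/-! ### The Basilica group -/

mutual
  /-- The generator `a` of the Basilica group, as a function on words. -/
  def aF : List Bool → List Bool
    | [] => []
    | false :: w => false :: w
    | true :: w => true :: bF w
  /-- The generator `b` of the Basilica group, as a function on words. -/
  def bF : List Bool → List Bool
    | [] => []
    | false :: w => true :: aF w
    | true :: w => false :: w
end

mutual
  /-- The inverse of `aF`. -/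
  def aI : List Bool → List Bool
    | [] => []
    | false :: w => false :: w
    | true :: w => true :: bI w
  /-- The inverse of `bF`. -/
  def bI : List Bool → List Bool
    | [] => []
    | false :: w => true :: w
    | true :: w => false :: aI w
end

mutual
  theorem aI_aF : ∀ w, aI (aF w) = w
    | [] => rfl
    | false :: _ => rfl
    | true :: w => by simp [aF, aI, bI_bF w]
  theorem bI_bF : ∀ w, bI (bF w) = w
    | [] => rfl
    | false :: w => by simp [bF, bI, aI_aF w]
    | true :: _ => rfl
end

mutual
  theorem aF_aI : ∀ w, aF (aI w) = w
    | [] => rfl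
    | false :: _ => rfl
    | true :: w => by simp [aI, aF, bF_bI w]
  theorem bF_bI : ∀ w, bF (bI w) = w
    | [] => rfl
    | false :: _ => by simp [bI, bF]
    | true :: w => by simp [bI, bF, aF_aI w]
end

/-- The generator `a` of the Basilica group. -/
def aP : Perm (List Bool) := ⟨aF, aI, aI_aF, aF_aI⟩

/-- The generator `b` of the Basilica group. -/
def bP : Perm (List Bool) := ⟨bF, bI, bI_bF, bF_bI⟩

/-- The Basilica group `𝓑 = ⟨a, b⟩ ≤ Aut({0,1}*)`. -/
def BasilicaGroup : Subgroup (Perm (List Bool)) := Subgroup.closure {aP, bP}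

/-- The image of a subgroup of the first-level stabiliser under
`ψ₁ = (φ₀, φ₁)`: pairs `(σ₀, σ₁)` arising as the pair of first-level sections of
some `g ∈ H`. -/
def psi1Image (H : Subgroup (Perm (List Bool))) :
    Subgroup (Perm (List Bool) × Perm (List Bool)) where
  carrier := {p | ∃ g ∈ H, ∀ w : List Bool,
      g (false :: w) = false :: p.1 w ∧ g (true :: w) = true :: p.2 w}
  one_mem' := ⟨1, H.one_mem, fun w => by simp⟩
  mul_mem' := by
    rintro p q ⟨g, hgH, hg⟩ ⟨g', hg'H, hg'⟩
    refine ⟨g * g', H.mul_mem hgH hg'H, fun w => ⟨?_, ?_⟩⟩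
    · simp [Equiv.Perm.mul_apply, (hg' w).1, (hg (q.1 w)).1]
    · simp [Equiv.Perm.mul_apply, (hg' w).2, (hg (q.2 w)).2]
  inv_mem' := by
    rintro p ⟨g, hgH, hg⟩
    refine ⟨g⁻¹, H.inv_mem hgH, fun w => ⟨?_, ?_⟩⟩
    · have h1 : g (false :: p.1⁻¹ w) = false :: w := by
        rw [(hg (p.1⁻¹ w)).1]; simp
      have h2 : g⁻¹ (false :: w) = false :: p.1⁻¹ w := by
        rw [← h1]; simp
      simpa using h2
    · have h1 : g (true :: p.2⁻¹ w) = true :: w := by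
        rw [(hg (p.2⁻¹ w)).2]; simp
      have h2 : g⁻¹ (true :: w) = true :: p.2⁻¹ w := by
        rw [← h1]; simp
      simpa using h2




/-! ### Concrete model of the discrete Heisenberg group -/

@[ext] structure TH where
  m : ℤ
  n : ℤ
  p : ℤ

namespace TH

instance : Mul TH := ⟨fun a b => ⟨a.m + b.m, a.n + b.n, a.p + b.p + a.m * b.n⟩⟩
instance : One TH := ⟨⟨0, 0, 0⟩⟩
instance : Inv TH := ⟨fun a => ⟨-a.m, -a.n, -a.p + a.m * a.n⟩⟩

@[simp] lemma mul_m (a b : TH) : (a * b).m = a.m + b.m := rfl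
@[simp] lemma mul_n (a b : TH) : (a * b).n = a.n + b.n := rfl
@[simp] lemma mul_p (a b : TH) : (a * b).p = a.p + b.p + a.m * b.n := rfl
@[simp] lemma one_m : (1 : TH).m = 0 := rfl
@[simp] lemma one_n : (1 : TH).n = 0 := rfl
@[simp] lemma one_p : (1 : TH).p = 0 := rfl
@[simp] lemma inv_m (a : TH) : (a⁻¹).m = -a.m := rfl
@[simp] lemma inv_n (a : TH) : (a⁻¹).n = -a.n := rfl
@[simp] lemma inv_p (a : TH) : (a⁻¹).p = -a.p + a.m * a.n := rfl

instance : Group TH where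
  mul_assoc a b c := by ext <;> simp <;> ring
  one_mul a := by ext <;> simp
  mul_one a := by ext <;> simp
  inv_mul_cancel a := by ext <;> simp <;> ring

end TH

def xT : TH := ⟨1, 0, 0⟩
def yT : TH := ⟨0, 1, 0⟩

/-! ### Free class-2 nilpotent group of rank 3, coordinate model -/

@[ext] structure MM where
  e1 : ℤ
  e2 : ℤ
  e3 : ℤ
  c12 : ℤ
  c13 : ℤ
  c23 : ℤ

namespace MM

instance : Mul MM := ⟨fun a b =>
  ⟨a.e1 + b.e1, a.e2 + b.e2, a.e3 + b.e3,
   a.c12 + b.c12 + a.e1 * b.e2, a.c13 + b.c13 + a.e1 * b.e3, a.c23 + b.c23 + a.e2 * b.e3⟩⟩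
instance : One MM := ⟨⟨0, 0, 0, 0, 0, 0⟩⟩
instance : Inv MM := ⟨fun a =>
  ⟨-a.e1, -a.e2, -a.e3, -a.c12 + a.e1 * a.e2, -a.c13 + a.e1 * a.e3, -a.c23 + a.e2 * a.e3⟩⟩

@[simp] lemma mul_e1 (a b : MM) : (a * b).e1 = a.e1 + b.e1 := rfl
@[simp] lemma mul_e2 (a b : MM) : (a * b).e2 = a.e2 + b.e2 := rfl
@[simp] lemma mul_e3 (a b : MM) : (a * b).e3 = a.e3 + b.e3 := rfl
@[simp] lemma mul_c12 (a b : MM) : (a * b).c12 = a.c12 + b.c12 + a.e1 * b.e2 := rfl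
@[simp] lemma mul_c13 (a b : MM) : (a * b).c13 = a.c13 + b.c13 + a.e1 * b.e3 := rfl
@[simp] lemma mul_c23 (a b : MM) : (a * b).c23 = a.c23 + b.c23 + a.e2 * b.e3 := rfl
@[simp] lemma one_e1 : (1 : MM).e1 = 0 := rfl
@[simp] lemma one_e2 : (1 : MM).e2 = 0 := rfl
@[simp] lemma one_e3 : (1 : MM).e3 = 0 := rfl
@[simp] lemma one_c12 : (1 : MM).c12 = 0 := rfl
@[simp] lemma one_c13 : (1 : MM).c13 = 0 := rfl
@[simp] lemma one_c23 : (1 : MM).c23 = 0 := rfl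
@[simp] lemma inv_e1 (a : MM) : (a⁻¹).e1 = -a.e1 := rfl
@[simp] lemma inv_e2 (a : MM) : (a⁻¹).e2 = -a.e2 := rfl
@[simp] lemma inv_e3 (a : MM) : (a⁻¹).e3 = -a.e3 := rfl
@[simp] lemma inv_c12 (a : MM) : (a⁻¹).c12 = -a.c12 + a.e1 * a.e2 := rfl
@[simp] lemma inv_c13 (a : MM) : (a⁻¹).c13 = -a.c13 + a.e1 * a.e3 := rfl
@[simp] lemma inv_c23 (a : MM) : (a⁻¹).c23 = -a.c23 + a.e2 * a.e3 := rfl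

instance : Group MM where
  mul_assoc a b c := by ext <;> simp <;> ring
  one_mul a := by ext <;> simp
  mul_one a := by ext <;> simp
  inv_mul_cancel a := by ext <;> simp <;> ring

end MM

/-! ### The permutational wreath product `G ≀ C₂` -/

@[ext] structure Wr (G : Type*) [Group G] where
  u0 : G
  u1 : G
  rt : Bool

namespace Wr

variable {G : Type*} [Group G] {H : Type*} [Group H]

instance : Mul (Wr G) := ⟨fun a b =>
  ⟨(if b.rt then a.u1 else a.u0) * b.u0, (if b.rt then a.u0 else a.u1) * b.u1, xor a.rt b.rt⟩⟩
instance : One (Wr G) := ⟨⟨1, 1, false⟩⟩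
instance : Inv (Wr G) := ⟨fun a =>
  ⟨(if a.rt then a.u1 else a.u0)⁻¹, (if a.rt then a.u0 else a.u1)⁻¹, a.rt⟩⟩

@[simp] lemma mul_u0 (a b : Wr G) : (a * b).u0 = (if b.rt then a.u1 else a.u0) * b.u0 := rfl
@[simp] lemma mul_u1 (a b : Wr G) : (a * b).u1 = (if b.rt then a.u0 else a.u1) * b.u1 := rfl
@[simp] lemma mul_rt (a b : Wr G) : (a * b).rt = xor a.rt b.rt := rfl
@[simp] lemma one_u0 : (1 : Wr G).u0 = 1 := rfl
@[simp] lemma one_u1 : (1 : Wr G).u1 = 1 := rfl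
@[simp] lemma one_rt : (1 : Wr G).rt = false := rfl
@[simp] lemma inv_u0 (a : Wr G) : (a⁻¹).u0 = (if a.rt then a.u1 else a.u0)⁻¹ := rfl
@[simp] lemma inv_u1 (a : Wr G) : (a⁻¹).u1 = (if a.rt then a.u0 else a.u1)⁻¹ := rfl
@[simp] lemma inv_rt (a : Wr G) : (a⁻¹).rt = a.rt := rfl

instance : Group (Wr G) where
  mul_assoc a b c := by
    ext <;> rcases b with ⟨b0, b1, sb⟩ <;> rcases c with ⟨c0, c1, sc⟩ <;>
      cases sb <;> cases sc <;> simp [mul_assoc]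
  one_mul a := by ext <;> rcases a with ⟨a0, a1, s⟩ <;> cases s <;> simp
  mul_one a := by ext <;> simp
  inv_mul_cancel a := by ext <;> rcases a with ⟨a0, a1, s⟩ <;> cases s <;> simp

/-- The embedding of `G × G` in `Wr G`. -/
def j : G × G →* Wr G where
  toFun p := ⟨p.1, p.2, false⟩
  map_one' := rfl
  map_mul' p q := by ext <;> simp

/-- Functoriality of `Wr`. -/
def wmap (f : G →* H) : Wr G →* Wr H where
  toFun a := ⟨f a.u0, f a.u1, a.rt⟩
  map_one' := by ext <;> simp
  map_mul' a b := by rcases b with ⟨b0, b1, sb⟩ <;> ext <;> cases sb <;> simp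

end Wr

/-! ### The evaluation of a wreath element as a tree automorphism -/

/-- Build a permutation of `List Bool` from a root bit and two first-level sections. -/
def evE (a : Wr (Perm (List Bool))) : Perm (List Bool) where
  toFun w := match w with
    | [] => []
    | x :: v => (xor x a.rt) :: (if x then a.u1 v else a.u0 v)
  invFun w := match w with
    | [] => []
    | y :: u => (xor y a.rt) :: (if xor y a.rt then a.u1.symm u else a.u0.symm u)
  left_inv w := by
    rcases w with _ | ⟨x, v⟩
    · rfl
    · rcases a with ⟨p, q, r⟩; cases x <;> cases r <;> simp
  right_inv w := by
    rcases w with _ | ⟨y, u⟩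
    · rfl
    · rcases a with ⟨p, q, r⟩; cases y <;> cases r <;> simp

@[simp] lemma evE_nil (a : Wr (Perm (List Bool))) : evE a [] = [] := rfl
@[simp] lemma evE_cons (a : Wr (Perm (List Bool))) (x : Bool) (v : List Bool) :
    evE a (x :: v) = (xor x a.rt) :: (if x then a.u1 v else a.u0 v) := rfl

def ev : Wr (Perm (List Bool)) →* Perm (List Bool) where
  toFun := evE
  map_one' := by
    apply Equiv.ext; intro w
    rcases w with _ | ⟨x, v⟩
    · rfl
    · cases x <;> simp
  map_mul' a b := by
    apply Equiv.ext; intro w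
    rcases w with _ | ⟨x, v⟩
    · rfl
    · rcases a with ⟨a0, a1, r⟩; rcases b with ⟨b0, b1, s⟩
      cases x <;> cases r <;> cases s <;> simp [Equiv.Perm.mul_apply]

lemma ev_eq_one {p q : Perm (List Bool)} {r : Bool}
    (h : ev ⟨p, q, r⟩ = 1) : r = false ∧ p = 1 ∧ q = 1 := by
  have hx : ∀ w : List Bool, evE ⟨p, q, r⟩ w = w := by
    intro w; have := Equiv.ext_iff.mp h w; simpa [ev] using this
  have hr : r = false := by
    have h1 := hx [false]
    cases r
    · rfl
    · simp at h1
  subst hr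
  refine ⟨rfl, ?_, ?_⟩
  · apply Equiv.ext; intro v
    have := hx (false :: v); simpa using this
  · apply Equiv.ext; intro v
    have := hx (true :: v); simpa using this

/-! ### Free group homomorphisms -/

abbrev F2 := FreeGroup Bool

def fgen : Bool → Perm (List Bool) := fun x => cond x aP bP

/-- The canonical projection of the free group onto the Basilica group. -/
def piF : F2 →* Perm (List Bool) := FreeGroup.lift fgen

/-- The class-two invariants of a free group element. -/
def thT : F2 →* TH := FreeGroup.lift (fun x => cond x xT yT)

/-- The wreath recursion of the Basilica group, on the free group level. -/
def PsiF : F2 →* Wr F2 :=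
  FreeGroup.lift (fun x => cond x ⟨1, .of false, false⟩ ⟨.of true, 1, true⟩)

@[simp] lemma piF_a : piF (.of true) = aP := FreeGroup.lift_apply_of
@[simp] lemma piF_b : piF (.of false) = bP := FreeGroup.lift_apply_of
@[simp] lemma thT_a : thT (.of true) = xT := FreeGroup.lift_apply_of
@[simp] lemma thT_b : thT (.of false) = yT := FreeGroup.lift_apply_of
@[simp] lemma PsiF_a : PsiF (.of true) = ⟨1, .of false, false⟩ := FreeGroup.lift_apply_of
@[simp] lemma PsiF_b : PsiF (.of false) = ⟨.of true, 1, true⟩ := FreeGroup.lift_apply_of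

/-- The key recursion: `π = ev ∘ Wr(π) ∘ Ψ`. -/
lemma pi_recursion : piF = ev.comp ((Wr.wmap piF).comp PsiF) := by
  apply FreeGroup.ext_hom; intro x
  apply Equiv.ext; intro w
  cases x <;>
    simp only [MonoidHom.comp_apply, piF_a, piF_b, PsiF_a, PsiF_b] <;>
    rcases w with _ | ⟨y, v⟩ <;>
  first
    | rfl
    | (cases y <;> simp [ev, Wr.wmap, aP, bP, aF, bF] <;> rfl)


/-! ### The even-parity subgroup: alphabet and invariants -/

/-- Alphabet for the subgroup of even `b`-exponent: `A = a`, `C = b a b⁻¹`, `B = b²`. -/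
inductive G3 | A | C | B

/-- Inclusion of the subgroup words into the free group. -/
def iotaE : FreeGroup G3 →* F2 :=
  FreeGroup.lift (fun g => match g with
    | .A => .of true
    | .C => .of false * .of true * (.of false)⁻¹
    | .B => .of false * .of false)

/-- First-level sections of the subgroup generators. -/
def DeltaE : FreeGroup G3 →* F2 × F2 :=
  FreeGroup.lift (fun g => match g with
    | .A => (1, .of false)
    | .C => (.of false, 1)
    | .B => (.of true, .of true))

/-- Coordinates in the free class-2 group of rank 3. -/
def InvM : FreeGroup G3 →* MM :=
  FreeGroup.lift (fun g => match g with
    | .A => ⟨1, 0, 0, 0, 0, 0⟩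
    | .C => ⟨0, 1, 0, 0, 0, 0⟩
    | .B => ⟨0, 0, 1, 0, 0, 0⟩)

/-- The class-2 invariants of a subgroup word, in terms of its coordinates. -/
def rhoth : MM →* TH where
  toFun μ := ⟨μ.e1 + μ.e2, 2 * μ.e3, -μ.e2 + 2 * μ.c13 + 2 * μ.c23⟩
  map_one' := by ext <;> simp
  map_mul' a b := by ext <;> simp <;> ring

/-- The class-2 invariants of the two sections of a subgroup word. -/
def rhoTh : MM →* TH × TH where
  toFun μ := (⟨μ.e3, μ.e2, μ.e2 * μ.e3 - μ.c23⟩, ⟨μ.e3, μ.e1, μ.e1 * μ.e3 - μ.c13⟩)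
  map_one' := by
    refine Prod.ext ?_ ?_ <;> ext <;> simp
  map_mul' a b := by
    refine Prod.ext ?_ ?_ <;> ext <;> simp <;> ring

@[simp] lemma iotaE_A : iotaE (.of .A) = .of true := FreeGroup.lift_apply_of
@[simp] lemma iotaE_C : iotaE (.of .C) = .of false * .of true * (.of false)⁻¹ := FreeGroup.lift_apply_of
@[simp] lemma iotaE_B : iotaE (.of .B) = .of false * .of false := FreeGroup.lift_apply_of
@[simp] lemma DeltaE_A : DeltaE (.of .A) = (1, .of false) := FreeGroup.lift_apply_of
@[simp] lemma DeltaE_C : DeltaE (.of .C) = (.of false, 1) := FreeGroup.lift_apply_of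
@[simp] lemma DeltaE_B : DeltaE (.of .B) = (.of true, .of true) := FreeGroup.lift_apply_of
@[simp] lemma InvM_A : InvM (.of .A) = ⟨1, 0, 0, 0, 0, 0⟩ := FreeGroup.lift_apply_of
@[simp] lemma InvM_C : InvM (.of .C) = ⟨0, 1, 0, 0, 0, 0⟩ := FreeGroup.lift_apply_of
@[simp] lemma InvM_B : InvM (.of .B) = ⟨0, 0, 1, 0, 0, 0⟩ := FreeGroup.lift_apply_of

/-- The wreath recursion restricted to the even subgroup. -/
lemma Psi_iota : PsiF.comp iotaE = Wr.j.comp DeltaE := by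
  apply FreeGroup.ext_hom; intro g
  cases g <;>
    simp only [MonoidHom.comp_apply, iotaE_A, iotaE_C, iotaE_B, DeltaE_A, DeltaE_C, DeltaE_B,
      map_mul, map_inv, PsiF_a, PsiF_b] <;>
    ext <;> simp [Wr.j]

/-- Invariants of a subgroup word, computed through its coordinates. -/
lemma th_iota : thT.comp iotaE = rhoth.comp InvM := by
  apply FreeGroup.ext_hom; intro g
  cases g <;>
    simp only [MonoidHom.comp_apply, iotaE_A, iotaE_C, iotaE_B, InvM_A, InvM_C, InvM_B,
      map_mul, map_inv, thT_a, thT_b] <;>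
    ext <;> simp [rhoth, xT, yT] <;> ring

/-- Invariants of the sections, computed through the coordinates. -/
lemma Th_Delta : (thT.prodMap thT).comp DeltaE = rhoTh.comp InvM := by
  apply FreeGroup.ext_hom; intro g
  cases g <;>
    simp only [MonoidHom.comp_apply, DeltaE_A, DeltaE_C, DeltaE_B, InvM_A, InvM_C, InvM_B,
      MonoidHom.coe_prodMap, Prod.map] <;>
    refine Prod.ext ?_ ?_ <;> ext <;> simp [rhoTh, xT, yT]

/-- The linear algebra at the heart of the descent. -/
lemma key_linear (μ : MM) (h : rhoTh μ = 1) : rhoth μ = 1 := by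
  have h1 := congrArg (fun p => p.1.m) h
  have h2 := congrArg (fun p => p.1.n) h
  have h3 := congrArg (fun p => p.1.p) h
  have h4 := congrArg (fun p => p.2.n) h
  have h5 := congrArg (fun p => p.2.p) h
  simp [rhoTh] at h1 h2 h3 h4 h5
  simp [h1, h2, h4] at h3 h5
  ext <;> simp [rhoth, h1, h2, h3, h4, h5]

/-! ### Sections on the level of words -/

/-- Compute first-level sections and root permutation of a word in the generators.
Letters: `(true, s)` is `a^{±1}`, `(false, s)` is `b^{±1}`. -/
def sec : List (Bool × Bool) → List (Bool × Bool) × List (Bool × Bool) × Bool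
  | [] => ([], [], false)
  | p :: l =>
    let S := sec l
    if p.1 then
      ((if S.2.2 then (false, p.2) :: S.1 else S.1),
       (if S.2.2 then S.2.1 else (false, p.2) :: S.2.1), S.2.2)
    else if p.2 then
      ((if S.2.2 then S.1 else (true, true) :: S.1),
       (if S.2.2 then (true, true) :: S.2.1 else S.2.1), !S.2.2)
    else
      ((if S.2.2 then (true, false) :: S.1 else S.1),
       (if S.2.2 then S.2.1 else (true, false) :: S.2.1), !S.2.2)

lemma sec_len (l : List (Bool × Bool)) :
    (sec l).1.length + (sec l).2.1.length = l.length := by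
  induction l with
  | nil => rfl
  | cons p l ih =>
    rcases p with ⟨g, s⟩
    cases g <;> cases s <;> simp only [sec] <;>
      rcases hr : (sec l).2.2 <;> simp_all <;> omega

/-- Helpers for `FreeGroup.mk`. -/
lemma mk_cons (p : Bool × Bool) (l : List (Bool × Bool)) :
    FreeGroup.mk (p :: l) = FreeGroup.mk [p] * FreeGroup.mk l := by
  rw [FreeGroup.mul_mk]; rfl

lemma mk_singleton (g : Bool) (s : Bool) :
    FreeGroup.mk [(g, s)] = (cond s (FreeGroup.of g) (FreeGroup.of g)⁻¹) := by
  cases s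
  · show FreeGroup.mk [(g, false)] = (FreeGroup.of g)⁻¹
    rw [show (FreeGroup.of g : F2) = FreeGroup.mk [(g, true)] from rfl, FreeGroup.inv_mk]
    rfl
  · rfl

lemma of_mul_mk (g : Bool) (l : List (Bool × Bool)) :
    FreeGroup.of g * FreeGroup.mk l = FreeGroup.mk ((g, true) :: l) := by
  rw [mk_cons, mk_singleton]; rfl

lemma ofinv_mul_mk (g : Bool) (l : List (Bool × Bool)) :
    (FreeGroup.of g)⁻¹ * FreeGroup.mk l = FreeGroup.mk ((g, false) :: l) := by
  rw [mk_cons, mk_singleton]; rfl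

/-- Soundness of `sec` with respect to the wreath recursion. -/
lemma psi_mk (l : List (Bool × Bool)) :
    PsiF (FreeGroup.mk l) = ⟨FreeGroup.mk (sec l).1, FreeGroup.mk (sec l).2.1, (sec l).2.2⟩ := by
  induction l with
  | nil =>
    rw [show FreeGroup.mk ([] : List (Bool × Bool)) = 1 from (FreeGroup.one_eq_mk).symm]
    simp only [map_one]; rfl
  | cons p l ih =>
    rw [mk_cons, map_mul, ih]
    rcases p with ⟨g, s⟩
    rw [mk_singleton]
    cases g <;> cases s <;>
      rcases hr : (sec l).2.2 <;>
      ext <;>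
      (try rfl) <;>
      simp_all [sec, of_mul_mk, ofinv_mul_mk]


/-! ### Reduced words -/

/-- No-cancellation relation between adjacent letters. -/
def RR : (Bool × Bool) → (Bool × Bool) → Prop := fun p q => ¬(p.1 = q.1 ∧ p.2 = !q.2)

lemma chain_reduce (L : List (Bool × Bool)) : List.Chain' RR (FreeGroup.reduce L) := by
  induction L with
  | nil => simp [FreeGroup.reduce]; exact List.isChain_nil
  | cons p L ih =>
    rw [FreeGroup.reduce.cons]
    rcases h : FreeGroup.reduce L with _ | ⟨q, t⟩
    · simp [RR]; exact List.isChain_singleton _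
    · rw [h] at ih
      dsimp only
      split_ifs with hc
      · exact ih.tail
      · exact List.isChain_cons_cons.mpr ⟨hc, ih⟩

lemma chain_toWord (w : F2) : List.Chain' RR w.toWord := by
  rw [← FreeGroup.reduce_toWord]; exact chain_reduce _

/-! ### Structure of words one of whose sections is empty -/

lemma STR0 : ∀ l : List (Bool × Bool), List.Chain' RR l → (sec l).1 = [] →
    ((sec l).2.2 = false → ∀ p ∈ l, p.1 = true) ∧
    ((sec l).2.2 = true → ∃ as, l = (false, false) :: as ∧ ∀ p ∈ as, p.1 = true) := by
  intro l
  induction l with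
  | nil =>
    intro _ _
    refine ⟨fun _ p hp => absurd hp List.not_mem_nil, fun h => ?_⟩
    simp [sec] at h
  | cons p l ih =>
    intro hch h0
    have hcht : List.Chain' RR l := hch.tail
    rcases p with ⟨g, s⟩
    cases g
    · cases s
      · -- letter b⁻¹
        rcases hr : (sec l).2.2
        · have e1 : (sec ((false, false) :: l)).1 = (sec l).1 := by simp [sec, hr]
          have ert : (sec ((false, false) :: l)).2.2 = true := by simp [sec, hr]
          rw [e1] at h0
          rw [ert]
          have hall := (ih hcht h0).1 hr
          exact ⟨fun h => by simp at h, fun _ => ⟨l, rfl, hall⟩⟩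
        · have e1 : (sec ((false, false) :: l)).1 = (true, false) :: (sec l).1 := by
            simp [sec, hr]
          rw [e1] at h0; cases h0
      · -- letter b
        rcases hr : (sec l).2.2
        · have e1 : (sec ((false, true) :: l)).1 = (true, true) :: (sec l).1 := by
            simp [sec, hr]
          rw [e1] at h0; cases h0
        · have e1 : (sec ((false, true) :: l)).1 = (sec l).1 := by simp [sec, hr]
          rw [e1] at h0
          rcases (ih hcht h0).2 hr with ⟨as, hl, -⟩
          exfalso
          subst hl
          exact (List.isChain_cons_cons.mp hch).1 ⟨rfl, rfl⟩
    · -- letters a^{±1}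
      rcases hr : (sec l).2.2
      · have e1 : (sec ((true, s) :: l)).1 = (sec l).1 := by simp [sec, hr]
        have ert : (sec ((true, s) :: l)).2.2 = false := by simp [sec, hr]
        rw [e1] at h0
        rw [ert]
        have hall := (ih hcht h0).1 hr
        refine ⟨fun _ q hq => ?_, fun h => by simp at h⟩
        rcases List.mem_cons.mp hq with h | h
        · rw [h]
        · exact hall q h
      · have e1 : (sec ((true, s) :: l)).1 = (false, s) :: (sec l).1 := by simp [sec, hr]
        rw [e1] at h0; cases h0

lemma STR1 : ∀ l : List (Bool × Bool), List.Chain' RR l → (sec l).2.1 = [] →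
    ((sec l).2.2 = false → l = [] ∨
      ∃ as, l = (false, false) :: (as ++ [(false, true)]) ∧ ∀ p ∈ as, p.1 = true) ∧
    ((sec l).2.2 = true → ∃ as, l = as ++ [(false, true)] ∧ ∀ p ∈ as, p.1 = true) := by
  intro l
  induction l with
  | nil =>
    intro _ _
    exact ⟨fun _ => Or.inl rfl, fun h => by simp [sec] at h⟩
  | cons p l ih =>
    intro hch h1
    have hcht : List.Chain' RR l := hch.tail
    rcases p with ⟨g, s⟩
    cases g
    · cases s
      · -- letter b⁻¹
        rcases hr : (sec l).2.2
        · have e1 : (sec ((false, false) :: l)).2.1 = (true, false) :: (sec l).2.1 := by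
            simp [sec, hr]
          rw [e1] at h1; cases h1
        · have e1 : (sec ((false, false) :: l)).2.1 = (sec l).2.1 := by simp [sec, hr]
          have ert : (sec ((false, false) :: l)).2.2 = false := by simp [sec, hr]
          rw [e1] at h1
          rw [ert]
          rcases (ih hcht h1).2 hr with ⟨as, hl, hall⟩
          refine ⟨fun _ => Or.inr ⟨as, by rw [hl], hall⟩, fun h => by simp at h⟩
      · -- letter b
        rcases hr : (sec l).2.2
        · have e1 : (sec ((false, true) :: l)).2.1 = (sec l).2.1 := by simp [sec, hr]
          have ert : (sec ((false, true) :: l)).2.2 = true := by simp [sec, hr]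
          rw [e1] at h1
          rw [ert]
          rcases (ih hcht h1).1 hr with hnil | ⟨as, hl, -⟩
          · subst hnil
            exact ⟨fun h => by simp at h,
              fun _ => ⟨[], rfl, fun q hq => absurd hq List.not_mem_nil⟩⟩
          · exfalso
            subst hl
            exact (List.isChain_cons_cons.mp hch).1 ⟨rfl, rfl⟩
        · have e1 : (sec ((false, true) :: l)).2.1 = (true, true) :: (sec l).2.1 := by
            simp [sec, hr]
          rw [e1] at h1; cases h1
    · -- letters a^{±1}
      rcases hr : (sec l).2.2
      · have e1 : (sec ((true, s) :: l)).2.1 = (false, s) :: (sec l).2.1 := by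
          simp [sec, hr]
        rw [e1] at h1; cases h1
      · have e1 : (sec ((true, s) :: l)).2.1 = (sec l).2.1 := by simp [sec, hr]
        have ert : (sec ((true, s) :: l)).2.2 = true := by simp [sec, hr]
        rw [e1] at h1
        rw [ert]
        rcases (ih hcht h1).2 hr with ⟨as, hl, hall⟩
        refine ⟨fun h => by simp at h, fun _ => ⟨(true, s) :: as, by rw [hl]; rfl, ?_⟩⟩
        intro q hq
        rcases List.mem_cons.mp hq with h | h
        · rw [h]
        · exact hall q h

lemma mk_allA : ∀ l : List (Bool × Bool), (∀ p ∈ l, p.1 = true) →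
    ∃ k : ℤ, FreeGroup.mk l = (FreeGroup.of true : F2) ^ k := by
  intro l
  induction l with
  | nil => exact fun _ => ⟨0, by rw [← FreeGroup.one_eq_mk]; simp⟩
  | cons p l ih =>
    intro hall
    rcases p with ⟨g, s⟩
    have hg : g = true := hall (g, s) List.mem_cons_self
    subst hg
    rcases ih (fun q hq => hall q (List.mem_cons_of_mem _ hq)) with ⟨k, hk⟩
    refine ⟨(cond s 1 (-1)) + k, ?_⟩
    rw [mk_cons, mk_singleton, hk, zpow_add]
    cases s <;> simp

/-! ### Schreier rewriting into the even-parity subgroup -/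

def parity (l : List (Bool × Bool)) : Bool := l.foldr (fun p acc => xor (!p.1) acc) false

@[simp] lemma parity_nil : parity [] = false := rfl
@[simp] lemma parity_cons (p : Bool × Bool) (l : List (Bool × Bool)) :
    parity (p :: l) = xor (!p.1) (parity l) := rfl

lemma sec_rt (l : List (Bool × Bool)) : (sec l).2.2 = parity l := by
  induction l with
  | nil => rfl
  | cons p l ih =>
    rcases p with ⟨g, s⟩
    cases g <;> cases s <;> simp [sec, ih]

def erw : List (Bool × Bool) → Bool → FreeGroup G3
  | [], _ => 1
  | p :: l, s =>
    if p.1 then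
      (cond s (cond p.2 (.of .C) (.of .C)⁻¹) (cond p.2 (.of .A) (.of .A)⁻¹)) * erw l s
    else if p.2 then
      (cond s (.of .B) 1) * erw l (!s)
    else
      (cond s 1 (.of .B)⁻¹) * erw l (!s)

def rep (s : Bool) : F2 := cond s (.of false) 1

lemma snd_erw : ∀ (l : List (Bool × Bool)) (s : Bool),
    iotaE (erw l s) = rep s * FreeGroup.mk l * (rep (xor s (parity l)))⁻¹ := by
  intro l
  induction l with
  | nil =>
    intro s
    rw [← FreeGroup.one_eq_mk]
    cases s <;> simp [erw, rep]
  | cons p l ih =>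
    intro s
    rcases p with ⟨g, sg⟩
    rw [mk_cons, mk_singleton, parity_cons]
    cases g <;> cases sg <;> cases s <;> rcases ht : parity l <;>
      (try simp [erw, map_mul, map_inv, iotaE_A, iotaE_B, iotaE_C, ih, ht, rep]) <;>
      group

lemma mk_of_even_parity (l : List (Bool × Bool)) (hpar : parity l = false) :
    FreeGroup.mk l = iotaE (erw l false) := by
  rw [snd_erw, hpar]
  simp [rep]


/-! ### Sections of pure powers, and infinite order of the generators -/

lemma pi_one_components {w : F2} (h : piF w = 1) :
    (PsiF w).rt = false ∧ piF (PsiF w).u0 = 1 ∧ piF (PsiF w).u1 = 1 := by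
  have hx : piF w = ev ⟨piF (PsiF w).u0, piF (PsiF w).u1, (PsiF w).rt⟩ := by
    conv_lhs => rw [pi_recursion]
    rfl
  rw [hx] at h
  exact ev_eq_one h

lemma Psi_a_zpow (k : ℤ) :
    PsiF ((FreeGroup.of true : F2) ^ k) = ⟨1, (FreeGroup.of false : F2) ^ k, false⟩ := by
  rw [map_zpow, PsiF_a]
  rw [show (⟨1, FreeGroup.of false, false⟩ : Wr F2) = Wr.j (1, FreeGroup.of false) from rfl,
    ← map_zpow]
  have h : ((1, FreeGroup.of false) : F2 × F2) ^ k = (1, (FreeGroup.of false : F2) ^ k) := by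
    ext <;> simp
  rw [h]; rfl

lemma Psi_b2 : PsiF ((FreeGroup.of false) * (FreeGroup.of false) : F2) =
    ⟨FreeGroup.of true, FreeGroup.of true, false⟩ := by
  rw [map_mul, PsiF_b]; ext <;> simp

lemma Psi_b2_zpow (k : ℤ) :
    PsiF (((FreeGroup.of false) * (FreeGroup.of false) : F2) ^ k) =
      ⟨(FreeGroup.of true : F2) ^ k, (FreeGroup.of true : F2) ^ k, false⟩ := by
  rw [map_zpow, Psi_b2]
  rw [show (⟨FreeGroup.of true, FreeGroup.of true, false⟩ : Wr F2) =
    Wr.j (FreeGroup.of true, FreeGroup.of true) from rfl, ← map_zpow]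
  have h : ((FreeGroup.of true, FreeGroup.of true) : F2 × F2) ^ k
      = ((FreeGroup.of true : F2) ^ k, (FreeGroup.of true : F2) ^ k) := by
    ext <;> simp
  rw [h]; rfl

lemma pure_a : ∀ (N : ℕ) (k : ℤ), k.natAbs ≤ N →
    ((piF ((FreeGroup.of true : F2) ^ k) = 1 → k = 0) ∧
     (piF ((FreeGroup.of false : F2) ^ k) = 1 → k = 0)) := by
  intro N
  induction N with
  | zero => intro k hk; exact ⟨fun _ => by omega, fun _ => by omega⟩
  | succ N ih =>
    intro k hk
    have hb : piF ((FreeGroup.of false : F2) ^ k) = 1 → k = 0 := by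
      intro h
      rcases Int.even_or_odd k with ⟨j, hj⟩ | ⟨j, hj⟩
      · -- k = j + j
        by_cases hj0 : j = 0
        · omega
        have h2 : (FreeGroup.of false : F2) ^ (2 : ℤ)
            = FreeGroup.of false * FreeGroup.of false := zpow_two _
        have hbb : (FreeGroup.of false : F2) ^ k
            = ((FreeGroup.of false) * (FreeGroup.of false) : F2) ^ j := by
          rw [hj, show (j + j : ℤ) = 2 * j from by ring, zpow_mul, h2]
        rw [hbb] at h
        have hcomp := pi_one_components h
        rw [Psi_b2_zpow] at hcomp
        have ha' : piF ((FreeGroup.of true : F2) ^ j) = 1 := hcomp.2.1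
        have : j = 0 := (ih j (by omega)).1 ha'
        omega
      · -- k = 2j + 1 : root permutation is nontrivial
        exfalso
        have h2 : (FreeGroup.of false : F2) ^ (2 : ℤ)
            = FreeGroup.of false * FreeGroup.of false := zpow_two _
        have hsplit : (FreeGroup.of false : F2) ^ k
            = ((FreeGroup.of false) * (FreeGroup.of false) : F2) ^ j * (FreeGroup.of false) := by
          rw [hj, zpow_add, zpow_one, zpow_mul, h2]
        have hcomp := pi_one_components h
        have hrt := hcomp.1
        rw [hsplit, map_mul, Psi_b2_zpow, PsiF_b] at hrt
        simp at hrt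
    refine ⟨?_, hb⟩
    intro h
    have hcomp := pi_one_components h
    rw [Psi_a_zpow] at hcomp
    exact hb hcomp.2.2

/-! ### The key theorem: every relation of the Basilica group
has trivial class-2 invariants. -/

theorem key_theorem : ∀ w : F2, piF w = 1 → thT w = 1 := by
  suffices H : ∀ (N : ℕ) (w : F2), w.toWord.length ≤ N → piF w = 1 → thT w = 1 by
    intro w; exact H _ w le_rfl
  intro N
  induction N using Nat.strong_induction_on with
  | _ N ih =>
    intro w hlen hpi
    set l := w.toWord with hl
    have hmk : FreeGroup.mk l = w := FreeGroup.mk_toWord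
    have hch : List.Chain' RR l := chain_toWord w
    have hcomp := pi_one_components hpi
    have hΨ : PsiF w = ⟨FreeGroup.mk (sec l).1, FreeGroup.mk (sec l).2.1, (sec l).2.2⟩ := by
      rw [← hmk]; exact psi_mk l
    rw [hΨ] at hcomp
    obtain ⟨hrt, hp0, hp1⟩ := hcomp
    by_cases h0 : (sec l).1 = []
    · -- stalled: the word is a pure power of `a`
      have hall := (STR0 l hch h0).1 hrt
      rcases mk_allA l hall with ⟨k, hk⟩
      rw [← hmk, hk] at hpi
      have hk0 : k = 0 := (pure_a k.natAbs k le_rfl).1 hpi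
      rw [← hmk, hk, hk0]; simp
    · by_cases h1 : (sec l).2.1 = []
      · -- stalled: the word is `b⁻¹ a^k b`
        rcases (STR1 l hch h1).1 hrt with hnil | ⟨as, hlas, hall⟩
        · rw [← hmk, hnil, ← FreeGroup.one_eq_mk]; simp
        · rcases mk_allA as hall with ⟨k, hk⟩
          have hwform : w = (FreeGroup.of false)⁻¹ *
              ((FreeGroup.of true : F2) ^ k * FreeGroup.of false) := by
            rw [← hmk, hlas, mk_cons, mk_singleton,
              show FreeGroup.mk (as ++ [(false, true)])
                = FreeGroup.mk as * FreeGroup.of false from by rw [← FreeGroup.mul_mk]; rfl,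
              hk]
            simp [mul_assoc]
          have hak : piF ((FreeGroup.of true : F2) ^ k) = 1 := by
            have h5 := hpi
            rw [hwform, map_mul, map_mul, map_inv] at h5
            have h6 : piF (FreeGroup.of false)
                = piF ((FreeGroup.of true : F2) ^ k) * piF (FreeGroup.of false) :=
              inv_mul_eq_one.mp (by rw [← mul_assoc] at h5; exact h5)
            exact right_eq_mul.mp h6
          have hk0 : k = 0 := (pure_a k.natAbs k le_rfl).1 hak
          rw [hwform, hk0]; simp
      · -- descent: both sections are strictly shorter
        have hsl := sec_len l
        have hne0 : (sec l).1.length ≠ 0 := fun hc => h0 (List.length_eq_zero_iff.mp hc)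
        have hne1 : (sec l).2.1.length ≠ 0 := fun hc => h1 (List.length_eq_zero_iff.mp hc)
        have hlen0 : (sec l).1.length < l.length := by omega
        have hlen1 : (sec l).2.1.length < l.length := by omega
        have hNl : l.length ≤ N := hlen
        have hred : ∀ L : List (Bool × Bool), (FreeGroup.mk L).toWord.length ≤ L.length := by
          intro L
          rw [FreeGroup.toWord_mk]
          exact FreeGroup.Red.length_le FreeGroup.reduce.red
        have hw0 : thT (FreeGroup.mk (sec l).1) = 1 :=
          ih (sec l).1.length (by omega) _ (hred _) hp0
        have hw1 : thT (FreeGroup.mk (sec l).2.1) = 1 :=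
          ih (sec l).2.1.length (by omega) _ (hred _) hp1
        have hpar : parity l = false := by rw [← sec_rt]; exact hrt
        set v := erw l false with hv
        have hiv : iotaE v = w := by rw [← hmk]; exact (mk_of_even_parity l hpar).symm
        have h3 : PsiF (iotaE v) = Wr.j (DeltaE v) := by
          rw [← MonoidHom.comp_apply, Psi_iota, MonoidHom.comp_apply]
        rw [hiv, hΨ] at h3
        have hD : DeltaE v = (FreeGroup.mk (sec l).1, FreeGroup.mk (sec l).2.1) :=
          Prod.ext (congrArg Wr.u0 h3.symm) (congrArg Wr.u1 h3.symm)
        have hTh : rhoTh (InvM v) = 1 := by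
          rw [← MonoidHom.comp_apply, ← Th_Delta, MonoidHom.comp_apply, hD]
          have : (thT.prodMap thT) (FreeGroup.mk (sec l).1, FreeGroup.mk (sec l).2.1)
              = (thT (FreeGroup.mk (sec l).1), thT (FreeGroup.mk (sec l).2.1)) := rfl
          rw [this, hw0, hw1]; rfl
        have hth : rhoth (InvM v) = 1 := key_linear _ hTh
        rw [← hiv, ← MonoidHom.comp_apply, th_iota, MonoidHom.comp_apply, hth]


/-! ### Normal forms in groups of nilpotency class two -/

section ClassTwo

variable {Q : Type*} [Group Q] (A B C : Q) (hAB : A * B = B * A * C) (hC : ∀ q : Q, C * q = q * C)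

include hC in
private lemma hCom : ∀ q : Q, Commute C q := fun q => hC q

include hC in
private lemma hCz : ∀ (k : ℤ) (q : Q), C ^ k * q = q * C ^ k :=
  fun k q => ((hCom C hC q).zpow_left k).eq

include hAB in
private lemma hBA : B * A = A * B * C⁻¹ := by rw [hAB]; group

include hAB hC in
private lemma hABi : A * B⁻¹ = B⁻¹ * A * C⁻¹ := by
  have h1 : C⁻¹ * B⁻¹ = B⁻¹ * C⁻¹ := ((hCom C hC B⁻¹).inv_left).eq
  calc A * B⁻¹ = B⁻¹ * (B * A * B⁻¹) := by group
  _ = B⁻¹ * (A * B * C⁻¹ * B⁻¹) := by rw [← hBA A B C hAB]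
  _ = B⁻¹ * (A * B * (C⁻¹ * B⁻¹)) := by rw [mul_assoc (A * B)]
  _ = B⁻¹ * (A * B * (B⁻¹ * C⁻¹)) := by rw [h1]
  _ = B⁻¹ * A * C⁻¹ := by group

include hAB hC in
private lemma sw1 : ∀ n : ℤ, A * B ^ n = B ^ n * A * C ^ n := by
  intro n
  induction n using Int.induction_on with
  | zero => simp
  | succ n ih =>
    calc A * B ^ ((n : ℤ) + 1) = (A * B ^ (n : ℤ)) * B := by rw [zpow_add_one, mul_assoc]
    _ = (B ^ (n : ℤ) * A * C ^ (n : ℤ)) * B := by rw [ih]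
    _ = B ^ (n : ℤ) * A * B * C ^ (n : ℤ) := by
        rw [mul_assoc, hCz C hC (n : ℤ) B, ← mul_assoc]
    _ = B ^ (n : ℤ) * (A * B) * C ^ (n : ℤ) := by rw [mul_assoc (B ^ (n : ℤ))]
    _ = B ^ (n : ℤ) * (B * A * C) * C ^ (n : ℤ) := by rw [hAB]
    _ = B ^ ((n : ℤ) + 1) * A * C ^ ((n : ℤ) + 1) := by group
  | pred n ih =>
    calc A * B ^ (-(n : ℤ) - 1) = (A * B ^ (-(n : ℤ))) * B⁻¹ := by rw [zpow_sub_one, mul_assoc]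
    _ = (B ^ (-(n : ℤ)) * A * C ^ (-(n : ℤ))) * B⁻¹ := by rw [ih]
    _ = B ^ (-(n : ℤ)) * A * B⁻¹ * C ^ (-(n : ℤ)) := by
        rw [mul_assoc, hCz C hC (-(n : ℤ)) B⁻¹, ← mul_assoc]
    _ = B ^ (-(n : ℤ)) * (A * B⁻¹) * C ^ (-(n : ℤ)) := by rw [mul_assoc (B ^ (-(n : ℤ)))]
    _ = B ^ (-(n : ℤ)) * (B⁻¹ * A * C⁻¹) * C ^ (-(n : ℤ)) := by rw [hABi A B C hAB hC]
    _ = B ^ (-(n : ℤ) - 1) * A * C ^ (-(n : ℤ) - 1) := by group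

include hAB hC in
private lemma sw1i : ∀ n : ℤ, A⁻¹ * B ^ n = B ^ n * A⁻¹ * C ^ (-n) := by
  intro n
  have h := sw1 A B C hAB hC n
  have h2 : A⁻¹ * (B ^ n * A * C ^ n) = B ^ n := by rw [← h]; group
  calc A⁻¹ * B ^ n = A⁻¹ * (B ^ n * A * C ^ n) * (C ^ n)⁻¹ * A⁻¹ := by group
  _ = B ^ n * (C ^ n)⁻¹ * A⁻¹ := by rw [h2]
  _ = B ^ n * ((C ^ n)⁻¹ * A⁻¹) := by rw [mul_assoc]
  _ = B ^ n * (A⁻¹ * (C ^ n)⁻¹) := by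
      have hcc : (C ^ n)⁻¹ * A⁻¹ = A⁻¹ * (C ^ n)⁻¹ :=
        (((hCom C hC A⁻¹).zpow_left n).inv_left).eq
      rw [hcc]
  _ = B ^ n * A⁻¹ * C ^ (-n) := by rw [zpow_neg]; group

include hAB hC in
private lemma sw2 : ∀ m n : ℤ, A ^ m * B ^ n = B ^ n * A ^ m * C ^ (m * n) := by
  intro m n
  induction m using Int.induction_on with
  | zero => simp
  | succ m ih =>
    calc A ^ ((m : ℤ) + 1) * B ^ n = A ^ (m : ℤ) * (A * B ^ n) := by
          rw [zpow_add_one, mul_assoc]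
    _ = A ^ (m : ℤ) * (B ^ n * A * C ^ n) := by rw [sw1 A B C hAB hC n]
    _ = (A ^ (m : ℤ) * B ^ n) * (A * C ^ n) := by group
    _ = (B ^ n * A ^ (m : ℤ) * C ^ ((m : ℤ) * n)) * (A * C ^ n) := by rw [ih]
    _ = B ^ n * A ^ (m : ℤ) * (C ^ ((m : ℤ) * n) * A) * C ^ n := by group
    _ = B ^ n * A ^ (m : ℤ) * (A * C ^ ((m : ℤ) * n)) * C ^ n := by
        rw [hCz C hC ((m : ℤ) * n) A]
    _ = B ^ n * A ^ ((m : ℤ) + 1) * C ^ (((m : ℤ) + 1) * n) := by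
        rw [zpow_add_one A, show ((m : ℤ) + 1) * n = (m : ℤ) * n + n from by ring,
          zpow_add C]
        group
  | pred m ih =>
    calc A ^ (-(m : ℤ) - 1) * B ^ n = A ^ (-(m : ℤ)) * (A⁻¹ * B ^ n) := by
          rw [zpow_sub_one, mul_assoc]
    _ = A ^ (-(m : ℤ)) * (B ^ n * A⁻¹ * C ^ (-n)) := by rw [sw1i A B C hAB hC n]
    _ = (A ^ (-(m : ℤ)) * B ^ n) * (A⁻¹ * C ^ (-n)) := by group
    _ = (B ^ n * A ^ (-(m : ℤ)) * C ^ (-(m : ℤ) * n)) * (A⁻¹ * C ^ (-n)) := by rw [ih]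
    _ = B ^ n * A ^ (-(m : ℤ)) * (C ^ (-(m : ℤ) * n) * A⁻¹) * C ^ (-n) := by group
    _ = B ^ n * A ^ (-(m : ℤ)) * (A⁻¹ * C ^ (-(m : ℤ) * n)) * C ^ (-n) := by
        rw [hCz C hC (-(m : ℤ) * n) A⁻¹]
    _ = B ^ (n : ℤ) * A ^ (-(m : ℤ) - 1) * C ^ ((-(m : ℤ) - 1) * n) := by
        rw [zpow_sub_one A, show (-(m : ℤ) - 1) * n = -(m : ℤ) * n + -n from by ring,
          zpow_add C, zpow_neg C n]
        group

/-- The normal-form homomorphism from the Heisenberg model into a group with a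
central commutator. -/
def psiHom : TH →* Q where
  toFun t := B ^ t.n * A ^ t.m * C ^ t.p
  map_one' := by simp
  map_mul' t t' := by
    show B ^ (t.n + t'.n) * A ^ (t.m + t'.m) * C ^ (t.p + t'.p + t.m * t'.n)
      = (B ^ t.n * A ^ t.m * C ^ t.p) * (B ^ t'.n * A ^ t'.m * C ^ t'.p)
    symm
    calc (B ^ t.n * A ^ t.m * C ^ t.p) * (B ^ t'.n * A ^ t'.m * C ^ t'.p)
        = B ^ t.n * A ^ t.m * (C ^ t.p * (B ^ t'.n * A ^ t'.m)) * C ^ t'.p := by group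
    _ = B ^ t.n * A ^ t.m * ((B ^ t'.n * A ^ t'.m) * C ^ t.p) * C ^ t'.p := by
          rw [hCz C hC t.p (B ^ t'.n * A ^ t'.m)]
    _ = B ^ t.n * (A ^ t.m * B ^ t'.n) * A ^ t'.m * (C ^ t.p * C ^ t'.p) := by group
    _ = B ^ t.n * (B ^ t'.n * A ^ t.m * C ^ (t.m * t'.n)) * A ^ t'.m * (C ^ t.p * C ^ t'.p) := by
          rw [sw2 A B C hAB hC t.m t'.n]
    _ = (B ^ t.n * B ^ t'.n * A ^ t.m) * (C ^ (t.m * t'.n) * A ^ t'.m) * (C ^ t.p * C ^ t'.p) := by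
          group
    _ = (B ^ t.n * B ^ t'.n * A ^ t.m) * (A ^ t'.m * C ^ (t.m * t'.n)) * (C ^ t.p * C ^ t'.p) := by
          rw [hCz C hC (t.m * t'.n) (A ^ t'.m)]
    _ = B ^ (t.n + t'.n) * A ^ (t.m + t'.m) * C ^ (t.p + t'.p + t.m * t'.n) := by
          rw [zpow_add B, zpow_add A, show t.p + t'.p + t.m * t'.n
            = t.m * t'.n + (t.p + t'.p) from by ring, zpow_add C]
          group

lemma psiHom_apply (t : TH) : psiHom A B C hAB hC t = B ^ t.n * A ^ t.m * C ^ t.p := rfl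

end ClassTwo

/-- The discrete Heisenberg group: the group of 3×3 upper triangular integer
matrices with all diagonal entries equal to 1 (as a subgroup of the units of
the matrix ring). -/
def Heisenberg : Subgroup (Matrix (Fin 3) (Fin 3) ℤ)ˣ where
  carrier := {u | (∀ i : Fin 3, (u : Matrix (Fin 3) (Fin 3) ℤ) i i = 1) ∧
      ∀ i j : Fin 3, (j : ℕ) < (i : ℕ) → (u : Matrix (Fin 3) (Fin 3) ℤ) i j = 0}
  one_mem' := by
    constructor
    · intro i; simp [Matrix.one_apply]
    · intro i j h
      have hij : i ≠ j := Fin.ne_of_val_ne (by omega)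
      simp [Matrix.one_apply, hij]
  mul_mem' := by
    rintro u v ⟨hu1, hu2⟩ ⟨hv1, hv2⟩
    constructor
    · intro i
      fin_cases i <;>
        simp [Units.val_mul, Matrix.mul_apply, Fin.sum_univ_three,
          hu1 0, hu1 1, hu1 2, hv1 0, hv1 1, hv1 2,
          hu2 1 0 (by norm_num), hu2 2 0 (by norm_num), hu2 2 1 (by norm_num),
          hv2 1 0 (by norm_num), hv2 2 0 (by norm_num), hv2 2 1 (by norm_num)]
    · intro i j h
      fin_cases i <;> fin_cases j <;> simp at h ⊢ <;>
        simp [Units.val_mul, Matrix.mul_apply, Fin.sum_univ_three,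
          hu1 0, hu1 1, hu1 2, hv1 0, hv1 1, hv1 2,
          hu2 1 0 (by norm_num), hu2 2 0 (by norm_num), hu2 2 1 (by norm_num),
          hv2 1 0 (by norm_num), hv2 2 0 (by norm_num), hv2 2 1 (by norm_num)]
  inv_mem' := by
    rintro u ⟨hu1, hu2⟩
    have h1 : (↑u : Matrix (Fin 3) (Fin 3) ℤ) *
        !![1, -(↑u : Matrix (Fin 3) (Fin 3) ℤ) 0 1,
            (↑u : Matrix (Fin 3) (Fin 3) ℤ) 0 1 * (↑u : Matrix (Fin 3) (Fin 3) ℤ) 1 2 -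
              (↑u : Matrix (Fin 3) (Fin 3) ℤ) 0 2;
          0, 1, -(↑u : Matrix (Fin 3) (Fin 3) ℤ) 1 2;
          0, 0, 1] = 1 := by
      ext i j
      fin_cases i <;> fin_cases j <;>
        simp [Matrix.mul_apply, Fin.sum_univ_three, Matrix.one_apply,
          hu1 0, hu1 1, hu1 2,
          Matrix.vecHead, Matrix.vecTail,
          hu2 1 0 (by norm_num), hu2 2 0 (by norm_num), hu2 2 1 (by norm_num)] <;> ring
    have h2 : (↑u⁻¹ : Matrix (Fin 3) (Fin 3) ℤ) = _ := Units.inv_eq_of_mul_eq_one_right h1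
    constructor
    · intro i
      rw [h2]
      fin_cases i <;> simp
    · intro i j h
      rw [h2]
      fin_cases i <;> fin_cases j <;>
        simp [Matrix.vecHead, Matrix.vecTail] at h ⊢


/-- `γ₃(𝓑) = [[𝓑,𝓑],𝓑]`, the third term of the lower central series of the
Basilica group (inside the group `𝓑` itself). -/
def gamma3Basilica : Subgroup ↥BasilicaGroup :=
  ⁅(⁅(⊤ : Subgroup ↥BasilicaGroup), (⊤ : Subgroup ↥BasilicaGroup)⁆),
    (⊤ : Subgroup ↥BasilicaGroup)⁆

instance : gamma3Basilica.Normal := by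
  unfold gamma3Basilica
  infer_instance


/-! ### `TH` is the Heisenberg group: matrix realisation -/

def toMat (t : TH) : Matrix (Fin 3) (Fin 3) ℤ := !![1, t.m, t.p; 0, 1, t.n; 0, 0, 1]

lemma toMat_mul (t t' : TH) : toMat t * toMat t' = toMat (t * t') := by
  ext i j
  fin_cases i <;> fin_cases j <;>
    simp [toMat, Matrix.mul_apply, Fin.sum_univ_three, Matrix.vecHead, Matrix.vecTail] <;> ring

lemma toMat_one : toMat 1 = 1 := by
  ext i j
  fin_cases i <;> fin_cases j <;> simp [toMat, Matrix.one_apply, Matrix.vecHead, Matrix.vecTail]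

def toUnit (t : TH) : (Matrix (Fin 3) (Fin 3) ℤ)ˣ where
  val := toMat t
  inv := toMat t⁻¹
  val_inv := by rw [toMat_mul, mul_inv_cancel, toMat_one]
  inv_val := by rw [toMat_mul, inv_mul_cancel, toMat_one]

lemma toUnit_mem (t : TH) : toUnit t ∈ Heisenberg := by
  constructor
  · intro i; fin_cases i <;> simp [toUnit, toMat, Matrix.vecHead, Matrix.vecTail]
  · intro i j h
    fin_cases i <;> fin_cases j <;> simp at h ⊢ <;> simp [toUnit, toMat, Matrix.vecHead, Matrix.vecTail]

/-- The concrete Heisenberg model is isomorphic to the matrix Heisenberg group. -/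
def THEquivHeis : TH ≃* ↥Heisenberg where
  toFun t := ⟨toUnit t, toUnit_mem t⟩
  invFun u := ⟨(u : (Matrix (Fin 3) (Fin 3) ℤ)ˣ).val 0 1,
    (u : (Matrix (Fin 3) (Fin 3) ℤ)ˣ).val 1 2, (u : (Matrix (Fin 3) (Fin 3) ℤ)ˣ).val 0 2⟩
  left_inv t := by ext <;> simp [toUnit, toMat, Matrix.vecHead, Matrix.vecTail]
  right_inv := by
    rintro ⟨u, hu1, hu2⟩
    apply Subtype.ext
    apply Units.ext
    ext i j
    fin_cases i <;> fin_cases j <;>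
      simp [toUnit, toMat, Matrix.vecHead, Matrix.vecTail, hu1 0, hu1 1, hu1 2,
        hu2 1 0 (by norm_num), hu2 2 0 (by norm_num), hu2 2 1 (by norm_num)]
  map_mul' t t' := by
    apply Subtype.ext
    apply Units.ext
    exact (toMat_mul t t').symm

open scoped commutatorElement

/-! ### Class-two facts about `TH` -/

lemma TH_comm_central (g h : TH) : ⁅g, h⁆ ∈ Subgroup.center TH := by
  rw [Subgroup.mem_center_iff]
  intro q
  rw [commutatorElement_def]
  ext <;> simp <;> ring

lemma TH_gamma3_bot :
    (⁅(⁅(⊤ : Subgroup TH), (⊤ : Subgroup TH)⁆), (⊤ : Subgroup TH)⁆ : Subgroup TH) ≤ ⊥ := by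
  apply Subgroup.commutator_le.mpr
  intro g hg q _
  have hcen : (⁅(⊤ : Subgroup TH), (⊤ : Subgroup TH)⁆ : Subgroup TH) ≤ Subgroup.center TH :=
    Subgroup.commutator_le.mpr fun a _ b _ => TH_comm_central a b
  have hcg := Subgroup.mem_center_iff.mp (hcen hg)
  have : ⁅g, q⁆ = 1 := commutatorElement_eq_one_iff_commute.mpr ((hcg q).symm)
  simp [this]

lemma thT_gamma3 {h : F2}
    (hh : h ∈ (⁅(⁅(⊤ : Subgroup F2), (⊤ : Subgroup F2)⁆), (⊤ : Subgroup F2)⁆ : Subgroup F2)) : thT h = 1 := by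
  have hmem : thT h ∈ (⁅(⁅Subgroup.map thT (⊤ : Subgroup F2), Subgroup.map thT (⊤ : Subgroup F2)⁆), Subgroup.map thT (⊤ : Subgroup F2)⁆ : Subgroup TH) := by
    rw [← Subgroup.map_commutator, ← Subgroup.map_commutator]
    exact Subgroup.mem_map_of_mem _ hh
  have hle : (⁅(⁅Subgroup.map thT (⊤ : Subgroup F2), Subgroup.map thT (⊤ : Subgroup F2)⁆), Subgroup.map thT (⊤ : Subgroup F2)⁆ :
      Subgroup TH) ≤ (⁅(⁅(⊤ : Subgroup TH), (⊤ : Subgroup TH)⁆), (⊤ : Subgroup TH)⁆ : Subgroup TH) :=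
    Subgroup.commutator_mono (Subgroup.commutator_mono le_top le_top) le_top
  exact Subgroup.mem_bot.mp (TH_gamma3_bot (hle hmem))

/-! ### Powers in `TH` -/

lemma xT_zpow : ∀ k : ℤ, xT ^ k = (⟨k, 0, 0⟩ : TH) := by
  intro k
  induction k using Int.induction_on with
  | zero => ext <;> simp
  | succ n ih => rw [zpow_add_one, ih]; ext <;> simp [xT] <;> ring
  | pred n ih => rw [zpow_sub_one, ih]; ext <;> simp [xT] <;> ring

lemma yT_zpow : ∀ k : ℤ, yT ^ k = (⟨0, k, 0⟩ : TH) := by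
  intro k
  induction k using Int.induction_on with
  | zero => ext <;> simp
  | succ n ih => rw [zpow_add_one, ih]; ext <;> simp [yT] <;> ring
  | pred n ih => rw [zpow_sub_one, ih]; ext <;> simp [yT] <;> ring

lemma zT_zpow : ∀ k : ℤ, (⟨0, 0, 1⟩ : TH) ^ k = (⟨0, 0, k⟩ : TH) := by
  intro k
  induction k using Int.induction_on with
  | zero => ext <;> simp
  | succ n ih => rw [zpow_add_one, ih]; ext <;> simp <;> ring
  | pred n ih => rw [zpow_sub_one, ih]; ext <;> simp <;> ring

lemma comm_xy : ⁅xT⁻¹, yT⁻¹⁆ = (⟨0, 0, 1⟩ : TH) := by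
  rw [commutatorElement_def]
  ext <;> simp [xT, yT]

/-! ### The projection onto the Basilica group -/

lemma range_piF : piF.range = BasilicaGroup := by
  have h1 : piF.range = Subgroup.closure (Set.range fgen) := FreeGroup.range_lift_eq_closure
  have h2 : Set.range fgen = {aP, bP} := by
    ext g
    simp only [Set.mem_range, Set.mem_insert_iff, Set.mem_singleton_iff]
    constructor
    · rintro ⟨b, rfl⟩; cases b
      · exact Or.inr rfl
      · exact Or.inl rfl
    · rintro (rfl | rfl)
      · exact ⟨true, rfl⟩
      · exact ⟨false, rfl⟩
  rw [h1, h2]; rfl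

/-- The projection of the free group onto the Basilica group, as a subgroup. -/
def piB : F2 →* ↥BasilicaGroup :=
  (MulEquiv.subgroupCongr range_piF).toMonoidHom.comp piF.rangeRestrict

lemma piB_surj : Function.Surjective piB :=
  (MulEquiv.subgroupCongr range_piF).surjective.comp piF.rangeRestrict_surjective

lemma piB_coe (w : F2) : ((piB w : ↥BasilicaGroup) : Perm (List Bool)) = piF w := rfl

lemma aP_mem : aP ∈ BasilicaGroup := Subgroup.subset_closure (Set.mem_insert _ _)
lemma bP_mem : bP ∈ BasilicaGroup := Subgroup.subset_closure (Set.mem_insert_of_mem _ rfl)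

/-- The images of the generators in the Basilica group. -/
def AAe : ↥BasilicaGroup := ⟨aP, aP_mem⟩
def BBe : ↥BasilicaGroup := ⟨bP, bP_mem⟩

lemma piB_a : piB (.of true) = AAe := Subtype.ext (by rw [piB_coe, piF_a]; rfl)
lemma piB_b : piB (.of false) = BBe := Subtype.ext (by rw [piB_coe, piF_b]; rfl)

/-- Injectivity input: if a normal-form element lies in `γ₃(𝓑)`, its invariants vanish. -/
lemma mem_gamma3_invariants (m n p : ℤ)
    (hmem : BBe ^ n * AAe ^ m * ⁅AAe⁻¹, BBe⁻¹⁆ ^ p ∈ gamma3Basilica) :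
    m = 0 ∧ n = 0 ∧ p = 0 := by
  have htop : Subgroup.map piB ⊤ = ⊤ := by
    rw [← MonoidHom.range_eq_map]
    exact MonoidHom.range_eq_top_of_surjective piB piB_surj
  have hmapg : Subgroup.map piB (⁅(⁅(⊤ : Subgroup F2), (⊤ : Subgroup F2)⁆), (⊤ : Subgroup F2)⁆ : Subgroup F2) = gamma3Basilica := by
    rw [Subgroup.map_commutator, Subgroup.map_commutator, htop]
    rfl
  rw [← hmapg] at hmem
  obtain ⟨h, hh, hπh⟩ := hmem
  set W : F2 := (FreeGroup.of false) ^ n * (FreeGroup.of true) ^ m *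
    ⁅((FreeGroup.of true : F2))⁻¹, (FreeGroup.of false : F2)⁻¹⁆ ^ p with hW
  have hπW : piB W = BBe ^ n * AAe ^ m * ⁅AAe⁻¹, BBe⁻¹⁆ ^ p := by
    rw [hW, map_mul, map_mul, map_zpow, map_zpow, map_zpow, map_commutatorElement,
      map_inv, map_inv, piB_a, piB_b]
  have hker : piF (W * h⁻¹) = 1 := by
    have h1 : piB (W * h⁻¹) = 1 := by
      rw [map_mul, map_inv, hπW, hπh]
      exact mul_inv_cancel _
    have h2 := congrArg (Subtype.val) h1
    rw [← piB_coe]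
    exact h2
  have hθ : thT (W * h⁻¹) = 1 := key_theorem _ hker
  have hθh : thT h = 1 := thT_gamma3 hh
  have hθW : thT W = 1 := by
    rw [map_mul, map_inv, hθh] at hθ
    simpa using hθ
  have hcomp : thT W = (⟨m, n, p⟩ : TH) := by
    rw [hW, map_mul, map_mul, map_zpow, map_zpow, map_zpow, map_commutatorElement,
      map_inv, map_inv, thT_a, thT_b, comm_xy, xT_zpow, yT_zpow, zT_zpow]
    ext <;> simp
  rw [hcomp] at hθW
  refine ⟨?_, ?_, ?_⟩
  · exact congrArg TH.m hθW
  · exact congrArg TH.n hθW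
  · exact congrArg TH.p hθW

lemma mul_eq_mul_commutator {G : Type*} [Group G] (a b : G) :
    a * b = b * a * ⁅a⁻¹, b⁻¹⁆ := by
  rw [commutatorElement_def]; group

/-- `𝓑/γ₃(𝓑)` is isomorphic to the discrete Heisenberg group
`H₃(ℤ)` of 3×3 upper triangular integer matrices with unit diagonal. -/
theorem basilica_mod_gamma3_iso_heisenberg :
    Nonempty ((↥BasilicaGroup ⧸ gamma3Basilica) ≃* ↥Heisenberg) := by
  set Ab := QuotientGroup.mk' gamma3Basilica AAe with hAb
  set Bb := QuotientGroup.mk' gamma3Basilica BBe with hBb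
  have hCmk : ⁅Ab⁻¹, Bb⁻¹⁆ = QuotientGroup.mk' gamma3Basilica ⁅AAe⁻¹, BBe⁻¹⁆ := by
    rw [map_commutatorElement, map_inv, map_inv, ← hAb, ← hBb]
  have hcen : ∀ q, ⁅Ab⁻¹, Bb⁻¹⁆ * q = q * ⁅Ab⁻¹, Bb⁻¹⁆ := by
    intro q
    obtain ⟨g, rfl⟩ := QuotientGroup.mk'_surjective gamma3Basilica q
    have h1 : ⁅⁅AAe⁻¹, BBe⁻¹⁆, g⁆ ∈ gamma3Basilica :=
      Subgroup.commutator_mem_commutator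
        (Subgroup.commutator_mem_commutator (Subgroup.mem_top _) (Subgroup.mem_top _))
        (Subgroup.mem_top _)
    have h2 : ⁅⁅Ab⁻¹, Bb⁻¹⁆, QuotientGroup.mk' gamma3Basilica g⁆ = 1 := by
      rw [hCmk, ← map_commutatorElement, QuotientGroup.mk'_apply]
      exact (QuotientGroup.eq_one_iff _).mpr h1
    exact (commutatorElement_eq_one_iff_commute.mp h2).eq
  have hAB : Ab * Bb = Bb * Ab * ⁅Ab⁻¹, Bb⁻¹⁆ := mul_eq_mul_commutator Ab Bb
  set ψ := psiHom Ab Bb ⁅Ab⁻¹, Bb⁻¹⁆ hAB hcen with hψ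
  have hinj : Function.Injective ψ := by
    rw [injective_iff_map_eq_one]
    intro t ht
    have hψt : ψ t = QuotientGroup.mk' gamma3Basilica
        (BBe ^ t.n * AAe ^ t.m * ⁅AAe⁻¹, BBe⁻¹⁆ ^ t.p) := by
      rw [hψ, psiHom_apply, hCmk, hAb, hBb, ← map_zpow, ← map_zpow, ← map_zpow,
        ← map_mul, ← map_mul]
    rw [hψt, QuotientGroup.mk'_apply] at ht
    have hmem : BBe ^ t.n * AAe ^ t.m * ⁅AAe⁻¹, BBe⁻¹⁆ ^ t.p ∈ gamma3Basilica :=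
      (QuotientGroup.eq_one_iff _).mp ht
    obtain ⟨hm, hn, hp⟩ := mem_gamma3_invariants t.m t.n t.p hmem
    ext
    · exact hm
    · exact hn
    · exact hp
  have hsurj : Function.Surjective ψ := by
    have hpre : ((BasilicaGroup.subtype) ⁻¹' {aP, bP} : Set ↥BasilicaGroup)
        = {AAe, BBe} := by
      ext g
      simp only [Set.mem_preimage, Subgroup.coe_subtype, Set.mem_insert_iff,
        Set.mem_singleton_iff, Subtype.ext_iff]
      exact Iff.rfl
    have htop : Subgroup.closure ({AAe, BBe} : Set ↥BasilicaGroup) = ⊤ := by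
      rw [← hpre]
      exact Subgroup.closure_preimage_eq_top ({aP, bP} : Set (Perm (List Bool)))
    intro q
    obtain ⟨g, rfl⟩ := QuotientGroup.mk'_surjective gamma3Basilica q
    have hg : g ∈ Subgroup.closure ({AAe, BBe} : Set ↥BasilicaGroup) := by
      rw [htop]; exact Subgroup.mem_top g
    refine Subgroup.closure_induction ?_ ?_ ?_ ?_ hg
    · rintro x (rfl | rfl)
      · exact ⟨⟨1, 0, 0⟩, by rw [hψ, psiHom_apply]; simp [hAb]⟩
      · exact ⟨⟨0, 1, 0⟩, by rw [hψ, psiHom_apply]; simp [hBb]⟩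
    · exact ⟨1, map_one ψ⟩
    · rintro x y hx hy ⟨t, ht⟩ ⟨t', ht'⟩
      exact ⟨t * t', by rw [map_mul, ht, ht', map_mul]⟩
    · rintro x hx ⟨t, ht⟩
      exact ⟨t⁻¹, by rw [map_inv, ht, map_inv]⟩
  exact ⟨(MulEquiv.ofBijective ψ ⟨hinj, hsurj⟩).symm.trans THEquivHeis⟩

end PaperDefs
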